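/- arXiv:2303.00873 — 3 statements merged into one kernel-verified Lean document; each statement's English description precedes it below -/
import Mathlib

section
/- If δ ∈ (0,1) and the sample size satisfies M ≥ (1/(2(ε−α)²))·log(L/δ), then the probability of the event {ω ∈ Ω : 𝕏₀^{α,M}(ω) ⊆ 𝕏₀^ε} is at least 1 − δ. -/
open MeasureTheory ProbabilityTheory
open scoped ENNReal

/-- Hoeffding's lemma for Bernoulli / indicator variables:
`1 - p + p * exp t ≤ exp (p*t + t^2/8)` for `p ∈ [0,1]`, `t ≥ 0`. -/
lemma bernoulli_mgf_le {p : ℝ} (hp0 : 0 ≤ p) (hp1 : p ≤ 1) {t : ℝ} (ht : 0 ≤ t) :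
    1 - p + p * Real.exp t ≤ Real.exp (p * t + t ^ 2 / 8) := by
  have hD : ∀ s : ℝ, 0 < 1 - p + p * Real.exp s := by
    intro s
    rcases le_or_gt (Real.exp s) 1 with h | h
    · nlinarith [Real.exp_pos s]
    · nlinarith [Real.exp_pos s]
  set f : ℝ → ℝ := fun s => p * s + s ^ 2 / 8 - Real.log (1 - p + p * Real.exp s) with hf_def
  set f' : ℝ → ℝ := fun s => p + s / 4 - p * Real.exp s / (1 - p + p * Real.exp s) with hf'_def
  have hDd : ∀ s : ℝ, HasDerivAt (fun u => 1 - p + p * Real.exp u) (p * Real.exp s) s := by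
    intro s
    exact ((Real.hasDerivAt_exp s).const_mul p).const_add (1 - p)
  have hfd : ∀ s : ℝ, HasDerivAt f (f' s) s := by
    intro s
    have h1 : HasDerivAt (fun u : ℝ => p * u + u ^ 2 / 8) (p + s * 2 / 8) s := by
      have := ((hasDerivAt_id s).const_mul p).add ((hasDerivAt_pow 2 s).div_const 8)
      simpa [mul_comm, Pi.add_def] using this
    have h2 : HasDerivAt (fun u : ℝ => Real.log (1 - p + p * Real.exp u))
        (p * Real.exp s / (1 - p + p * Real.exp s)) s := (hDd s).log (hD s).ne'
    have := h1.sub h2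
    convert this using 1
    · rfl
    · rfl
    · rfl
    simp only [hf'_def]
    ring
  have hf'd : ∀ s : ℝ, HasDerivAt f'
      (1 / 4 - p * Real.exp s * (1 - p) / (1 - p + p * Real.exp s) ^ 2) s := by
    intro s
    have h1 : HasDerivAt (fun u : ℝ => p + u / 4) (1 / 4) s := by
      simpa using ((hasDerivAt_id s).div_const 4).const_add p
    have h2 : HasDerivAt (fun u => p * Real.exp u / (1 - p + p * Real.exp u))
        ((p * Real.exp s * (1 - p + p * Real.exp s) - p * Real.exp s * (p * Real.exp s)) /
          (1 - p + p * Real.exp s) ^ 2) s :=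
      ((Real.hasDerivAt_exp s).const_mul p).div (hDd s) (hD s).ne'
    have := h1.sub h2
    convert this using 1
    · rfl
    · rfl
    · rfl
    have hne := (hD s).ne'
    ring
  have hf''_nonneg : ∀ s : ℝ,
      0 ≤ 1 / 4 - p * Real.exp s * (1 - p) / (1 - p + p * Real.exp s) ^ 2 := by
    intro s
    have hDs := hD s
    rw [sub_nonneg, div_le_iff₀ (by positivity)]
    nlinarith [sq_nonneg (1 - p - p * Real.exp s), Real.exp_pos s]
  have hf'mono : Monotone f' := by
    apply monotone_of_deriv_nonneg (fun s => (hf'd s).differentiableAt)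
    intro s
    rw [(hf'd s).deriv]
    exact hf''_nonneg s
  have hf'zero : f' 0 = 0 := by
    simp [hf'_def]
  have hf'nonneg : ∀ s ∈ Set.Ici (0:ℝ), 0 ≤ f' s := fun s hs => hf'zero ▸ hf'mono hs
  have hfmono : MonotoneOn f (Set.Ici (0:ℝ)) := by
    apply monotoneOn_of_deriv_nonneg (convex_Ici 0)
      (fun s _ => (hfd s).differentiableAt.continuousAt.continuousWithinAt)
      (fun s _ => (hfd s).differentiableAt.differentiableWithinAt)
    intro s hs
    rw [(hfd s).deriv]
    exact hf'nonneg s (interior_subset hs)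
  have hf0 : f 0 = 0 := by simp [hf_def]
  have hft : 0 ≤ f t := hf0 ▸ hfmono Set.self_mem_Ici ht ht
  have hlog : Real.log (1 - p + p * Real.exp t) ≤ p * t + t ^ 2 / 8 := by
    simp only [hf_def] at hft; linarith
  calc 1 - p + p * Real.exp t = Real.exp (Real.log (1 - p + p * Real.exp t)) :=
        (Real.exp_log (hD t)).symm
    _ ≤ _ := Real.exp_le_exp.mpr hlog

lemma chernoff_indicator_aux
    {Ω : Type*} [MeasurableSpace Ω] (P : Measure Ω) [IsProbabilityMeasure P]
    {E : Type*} [MeasurableSpace E] (μ : Measure E) [IsProbabilityMeasure μ]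
    {M : ℕ} (hM : 1 ≤ M) (Λ : Fin M → Ω → E)
    (hΛmeas : ∀ j, Measurable (Λ j))
    (hΛindep : iIndepFun Λ P)
    (hΛlaw : ∀ j, Measure.map (Λ j) P = μ)
    {A : Set E} (hA : MeasurableSet A)
    {ε α : ℝ} (hε : ε ∈ Set.Ioo (0 : ℝ) 1) (hα : α ∈ Set.Ico (0 : ℝ) ε)
    (hp : (μ A).toReal ≤ 1 - ε) :
    (P {ω | 1 - α ≤ (1 / M : ℝ) * ∑ j, A.indicator (fun _ => (1 : ℝ)) (Λ j ω)}).toReal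
      ≤ Real.exp (-(2 * M * (ε - α) ^ 2)) := by
  classical
  have hβ : 0 < ε - α := sub_pos.mpr hα.2
  set t : ℝ := 4 * (ε - α) with ht_def
  have ht : 0 ≤ t := by positivity
  set g : E → ℝ := A.indicator (fun _ => (1 : ℝ)) with hg_def
  have hgmeas : Measurable g := measurable_const.indicator hA
  set Y : Fin M → Ω → ℝ := fun j ω => g (Λ j ω) with hY_def
  have hYmeas : ∀ j, Measurable (Y j) := fun j => hgmeas.comp (hΛmeas j)
  have hYindep : iIndepFun Y P :=
    hΛindep.comp (fun _ => g) (fun _ => hgmeas)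
  set p : ℝ := (μ A).toReal with hp_def
  have hp0 : 0 ≤ p := ENNReal.toReal_nonneg
  have hp1 : p ≤ 1 := by
    rw [hp_def]
    exact ENNReal.toReal_le_of_le_ofReal one_pos.le (by simpa using prob_le_one (μ := μ) (s := A))
  have hY01 : ∀ j ω, Y j ω = 0 ∨ Y j ω = 1 := by
    intro j ω
    by_cases h : Λ j ω ∈ A
    · right; simp [hY_def, hg_def, Set.indicator_of_mem h]
    · left; simp [hY_def, hg_def, Set.indicator_of_notMem h]
  have hint : ∀ j, Integrable (fun ω => Real.exp (t * Y j ω)) P := by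
    intro j
    refine Integrable.mono' (integrable_const (Real.exp t))
      (((hYmeas j).const_mul t).exp.aestronglyMeasurable) (ae_of_all _ fun ω => ?_)
    rw [Real.norm_eq_abs, Real.abs_exp]
    apply Real.exp_le_exp.mpr
    rcases hY01 j ω with h | h <;> rw [h] <;> nlinarith
  have hmgf : ∀ j, mgf (Y j) P t = 1 - p + p * Real.exp t := by
    intro j
    have h1 : mgf (Y j) P t = ∫ y, Real.exp (t * g y) ∂μ := by
      rw [mgf, ← hΛlaw j,
        integral_map (hΛmeas j).aemeasurable ((hgmeas.const_mul t).exp.aestronglyMeasurable)]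
    rw [h1]
    have h2 : (fun y => Real.exp (t * g y))
        = fun y => A.indicator (fun _ => Real.exp t - 1) y + 1 := by
      funext y
      by_cases hy : y ∈ A
      · simp [hg_def, Set.indicator_of_mem hy]
      · simp [hg_def, Set.indicator_of_notMem hy]
    rw [h2, integral_add ((integrable_const _).indicator hA) (integrable_const 1),
      integral_indicator_const _ hA, integral_const]
    simp only [Measure.real, measure_univ, ENNReal.toReal_one, smul_eq_mul, one_smul, ← hp_def]
    ring
  have hMpos : (0 : ℝ) < M := by exact_mod_cast hM
  have hSetEq : {ω | 1 - α ≤ (1 / M : ℝ) * ∑ j, A.indicator (fun _ => (1 : ℝ)) (Λ j ω)}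
      = {ω | (M : ℝ) * (1 - α) ≤ (∑ j, Y j) ω} := by
    ext ω
    simp only [Set.mem_setOf_eq, Finset.sum_apply, hY_def, hg_def]
    rw [one_div, inv_mul_eq_div, le_div_iff₀ hMpos, mul_comm]
  have hSint : Integrable (fun ω => Real.exp (t * (∑ j, Y j) ω)) P :=
    hYindep.integrable_exp_mul_sum hYmeas (fun j _ => hint j)
  have key := measure_ge_le_exp_mul_mgf (μ := P) (X := ∑ j, Y j) ((M : ℝ) * (1 - α)) ht hSint
  rw [hYindep.mgf_sum hYmeas] at key
  rw [hSetEq]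
  refine key.trans ?_
  have hprod : ∏ j : Fin M, mgf (Y j) P t ≤ Real.exp ((M : ℝ) * (p * t + t ^ 2 / 8)) := by
    calc ∏ j : Fin M, mgf (Y j) P t ≤ ∏ _j : Fin M, Real.exp (p * t + t ^ 2 / 8) := by
          refine Finset.prod_le_prod (fun j _ => mgf_nonneg) (fun j _ => ?_)
          rw [hmgf j]
          exact bernoulli_mgf_le hp0 hp1 ht
      _ = Real.exp ((M : ℝ) * (p * t + t ^ 2 / 8)) := by
          rw [Finset.prod_const, Finset.card_univ, Fintype.card_fin, ← Real.exp_nat_mul]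
  calc Real.exp (-t * ((M : ℝ) * (1 - α))) * ∏ j : Fin M, mgf (Y j) P t
      ≤ Real.exp (-t * ((M : ℝ) * (1 - α))) * Real.exp ((M : ℝ) * (p * t + t ^ 2 / 8)) := by
        exact mul_le_mul_of_nonneg_left hprod (Real.exp_nonneg _)
    _ = Real.exp ((M : ℝ) * (p * t + t ^ 2 / 8 - t * (1 - α))) := by
        rw [← Real.exp_add]; ring_nf
    _ ≤ Real.exp (-(2 * M * (ε - α) ^ 2)) := by
        apply Real.exp_le_exp.mpr
        have hinner : p * t + t ^ 2 / 8 - t * (1 - α) ≤ -(2 * (ε - α) ^ 2) := by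
          rw [ht_def]; nlinarith [mul_le_mul_of_nonneg_left hp (by positivity : (0:ℝ) ≤ 4 * (ε - α))]
        have := mul_le_mul_of_nonneg_left hinner (Nat.cast_nonneg M : (0 : ℝ) ≤ M)
        linarith

/-- If `δ ∈ (0,1)` and `M ≥ (1/(2(ε−α)²))·log(L/δ)`, then the probability that
the sampled feasible set `𝕏₀^{α,M}(ω)` is contained in the feasible set `𝕏₀^ε`
is at least `1 − δ`. -/
theorem sampled_feasible_subset_of_large_M
    {Ω : Type*} [MeasurableSpace Ω] (P : Measure Ω) [IsProbabilityMeasure P]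
    {E : Type*} [MeasurableSpace E] (μ : Measure E) [IsProbabilityMeasure μ]
    {M : ℕ} (hM : 1 ≤ M) (Λ : Fin M → Ω → E)
    (hΛmeas : ∀ j, Measurable (Λ j))
    (hΛindep : iIndepFun Λ P)
    (hΛlaw : ∀ j, Measure.map (Λ j) P = μ)
    {X : Type*} (Ξ : Finset X) {L : ℕ} (hLcard : Ξ.card = L) (hL : 1 ≤ L)
    {N : ℕ} (hN : 1 ≤ N)
    (G : Fin (2 * N) → X → Set E) (hG : ∀ k x, MeasurableSet (G k x))
    {ε α : ℝ} (hε : ε ∈ Set.Ioo (0 : ℝ) 1) (hα : α ∈ Set.Ico (0 : ℝ) ε)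
    {δ : ℝ} (hδ : δ ∈ Set.Ioo (0 : ℝ) 1)
    (hMbound : (M : ℝ) ≥ 1 / (2 * (ε - α) ^ 2) * Real.log (L / δ)) :
    1 - δ ≤
      (P {ω | {x : X | x ∈ Ξ ∧ ∀ k : Fin (2 * N),
            1 - α ≤ (1 / M : ℝ) * ∑ j, (G k x).indicator (fun _ => (1 : ℝ)) (Λ j ω)}
          ⊆ {x : X | x ∈ Ξ ∧ ∀ k : Fin (2 * N), 1 - ε ≤ (μ (G k x)).toReal}}).toReal := by
  classical
  have hβ : 0 < ε - α := sub_pos.mpr hα.2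
  have hL0 : (0 : ℝ) < L := by exact_mod_cast hL
  have hδ0 : (0 : ℝ) < δ := hδ.1
  -- the bound `exp(-2M(ε-α)²) ≤ δ/L`
  have hexp : Real.exp (-(2 * M * (ε - α) ^ 2)) ≤ δ / L := by
    have h2 : (0 : ℝ) < 2 * (ε - α) ^ 2 := by positivity
    have h1 : Real.log (L / δ) ≤ 2 * (ε - α) ^ 2 * M := by
      have := mul_le_mul_of_nonneg_left hMbound h2.le
      calc Real.log (L / δ) = 2 * (ε - α) ^ 2 * (1 / (2 * (ε - α) ^ 2) * Real.log (L / δ)) := by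
            field_simp
        _ ≤ 2 * (ε - α) ^ 2 * M := this
    have hlogeq : Real.log (δ / L) = -Real.log (L / δ) := by
      rw [← Real.log_inv]
      congr 1
      field_simp
    rw [show δ / (L : ℝ) = Real.exp (Real.log (δ / L)) from (Real.exp_log (by positivity)).symm]
    apply Real.exp_le_exp.mpr
    rw [hlogeq]
    linarith
  -- choice of a violated constraint index
  have h2N : 0 < 2 * N := by omega
  set kx : X → Fin (2 * N) := fun x =>
    if h : ∃ k : Fin (2 * N), (μ (G k x)).toReal < 1 - ε then h.choose else ⟨0, h2N⟩ with hkx_def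
  have hkx : ∀ x, (∃ k : Fin (2 * N), (μ (G k x)).toReal < 1 - ε) →
      (μ (G (kx x) x)).toReal < 1 - ε := by
    intro x h
    simp only [hkx_def, dif_pos h]
    exact h.choose_spec
  -- bad set and bad events
  set badΞ : Finset X := Ξ.filter (fun x => ¬ ∀ k : Fin (2 * N), 1 - ε ≤ (μ (G k x)).toReal)
    with hbad_def
  set Ev : X → Set Ω := fun x =>
    {ω | 1 - α ≤ (1 / M : ℝ) * ∑ j, (G (kx x) x).indicator (fun _ => (1 : ℝ)) (Λ j ω)}
    with hEv_def
  have hEvmeas : ∀ x, MeasurableSet (Ev x) := by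
    intro x
    apply measurableSet_le measurable_const
    exact (Finset.measurable_sum Finset.univ
      (fun j _ => (measurable_const.indicator (hG (kx x) x)).comp (hΛmeas j))).const_mul _
  set B : Set Ω := ⋃ x ∈ badΞ, Ev x with hB_def
  have hBmeas : MeasurableSet B := Finset.measurableSet_biUnion _ (fun x _ => hEvmeas x)
  -- per-event bound
  have hEvbound : ∀ x ∈ badΞ, P (Ev x) ≤ ENNReal.ofReal (δ / L) := by
    intro x hx
    rw [hbad_def, Finset.mem_filter] at hx
    push_neg at hx
    obtain ⟨k₀, hk₀⟩ := hx.2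
    have hxk : (μ (G (kx x) x)).toReal < 1 - ε := hkx x ⟨k₀, hk₀⟩
    have := chernoff_indicator_aux P μ hM Λ hΛmeas hΛindep hΛlaw (hG (kx x) x) hε hα hxk.le
    rw [ENNReal.le_ofReal_iff_toReal_le (measure_ne_top P _) (by positivity)]
    exact this.trans hexp
  -- union bound
  have hPB : P B ≤ ENNReal.ofReal δ := by
    calc P B ≤ ∑ x ∈ badΞ, P (Ev x) := measure_biUnion_finset_le _ _
      _ ≤ ∑ _x ∈ badΞ, ENNReal.ofReal (δ / L) := Finset.sum_le_sum hEvbound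
      _ = (badΞ.card : ℝ≥0∞) * ENNReal.ofReal (δ / L) := by
          rw [Finset.sum_const, nsmul_eq_mul]
      _ ≤ (L : ℝ≥0∞) * ENNReal.ofReal (δ / L) := by
          gcongr
          exact_mod_cast hLcard ▸ Finset.card_filter_le _ _
      _ = ENNReal.ofReal δ := by
          rw [← ENNReal.ofReal_natCast, ← ENNReal.ofReal_mul (by positivity)]
          congr 1
          field_simp
  -- complement of bad set is contained in the goal event
  have hsub : Bᶜ ⊆ {ω | {x : X | x ∈ Ξ ∧ ∀ k : Fin (2 * N),
        1 - α ≤ (1 / M : ℝ) * ∑ j, (G k x).indicator (fun _ => (1 : ℝ)) (Λ j ω)}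
      ⊆ {x : X | x ∈ Ξ ∧ ∀ k : Fin (2 * N), 1 - ε ≤ (μ (G k x)).toReal}} := by
    intro ω hω
    intro x hx
    simp only [Set.mem_setOf_eq] at hx ⊢
    refine ⟨hx.1, ?_⟩
    by_contra hcon
    have hxbad : x ∈ badΞ := by
      rw [hbad_def, Finset.mem_filter]
      exact ⟨hx.1, hcon⟩
    have hωEv : ω ∈ Ev x := hx.2 (kx x)
    exact hω (Set.mem_biUnion hxbad hωEv)
  -- conclude
  have h1 : 1 - δ ≤ (P Bᶜ).toReal := by
    rw [prob_compl_eq_one_sub hBmeas, ENNReal.toReal_sub_of_le prob_le_one ENNReal.one_ne_top,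
      ENNReal.toReal_one]
    have : (P B).toReal ≤ δ := ENNReal.toReal_le_of_le_ofReal hδ0.le hPB
    linarith
  exact h1.trans (ENNReal.toReal_mono (measure_ne_top P _) (measure_mono hsub))
end

section
/- If for every row index j ∈ {1,…,t} the mean satisfies m_j ≤ x̄_j − sqrt((t−ε)/ε)·sqrt(V_j), then the probability that all t linear constraints hold simultaneously satisfies 𝒫({ω : (T·x(ω))_j ≤ x̄_j for all j ∈ {1,…,t}}) ≥ 1 − ε. -/
open MeasureTheory ProbabilityTheory Matrix

/-- **Cantelli's inequality** (one-sided Chebyshev), `toReal` form. -/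
lemma cantelli_toReal {Ω : Type*} [MeasurableSpace Ω] (P : Measure Ω) [IsProbabilityMeasure P]
    (Y : Ω → ℝ) (hY : MemLp Y 2 P) {a : ℝ} (ha : 0 < a) :
    (P {ω | (∫ ω, Y ω ∂P) + a ≤ Y ω}).toReal ≤
      variance Y P / (variance Y P + a ^ 2) := by
  set m := ∫ ω, Y ω ∂P with hm
  set V := variance Y P with hVdef
  have hV : 0 ≤ V := variance_nonneg _ _
  set u := V / a with hu
  have hu0 : 0 ≤ u := div_nonneg hV ha.le
  have hYm : MemLp (fun ω => Y ω - m + u) 2 P := (hY.sub (memLp_const m)).add (memLp_const u)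
  have hZint : Integrable (fun ω => (Y ω - m + u) ^ 2) P := hYm.integrable_sq
  have hYint : Integrable Y P := hY.integrable one_le_two
  have hEY : ∫ ω, (Y ω - m) ∂P = 0 := by
    rw [integral_sub hYint (integrable_const m)]
    simp [hm]
  have hVar : ∫ ω, (Y ω - m) ^ 2 ∂P = V := by
    rw [hVdef, variance_eq_integral hY.aemeasurable]
  have hsq : Integrable (fun ω => (Y ω - m) ^ 2) P := (hY.sub (memLp_const m)).integrable_sq
  have hEZ : ∫ ω, (Y ω - m + u) ^ 2 ∂P = V + u ^ 2 := by
    have hexp : ∀ ω, (Y ω - m + u) ^ 2 = (Y ω - m) ^ 2 + (2 * u) * (Y ω - m) + u ^ 2 := by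
      intro ω; ring
    simp_rw [hexp]
    have hlin : Integrable (fun ω => 2 * u * (Y ω - m)) P :=
      (hYint.sub (integrable_const m)).const_mul (2 * u)
    have hsum : Integrable (fun ω => (Y ω - m) ^ 2 + 2 * u * (Y ω - m)) P := hsq.add hlin
    rw [integral_add hsum (integrable_const _), integral_add hsq hlin,
      integral_const_mul, hEY, hVar]
    simp
  have hmarkov := mul_meas_ge_le_integral_of_nonneg
    (ae_of_all _ fun ω => sq_nonneg (Y ω - m + u)) hZint ((a + u) ^ 2)
  rw [hEZ] at hmarkov
  have hsub : {ω | m + a ≤ Y ω} ⊆ {ω | (a + u) ^ 2 ≤ (Y ω - m + u) ^ 2} := by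
    intro ω hω
    simp only [Set.mem_setOf_eq] at hω ⊢
    have h1 : a + u ≤ Y ω - m + u := by linarith
    exact pow_le_pow_left₀ (by positivity) h1 2
  have hmono : (P {ω | m + a ≤ Y ω}).toReal ≤
      (P {ω | (a + u) ^ 2 ≤ (Y ω - m + u) ^ 2}).toReal :=
    ENNReal.toReal_mono (measure_ne_top _ _) (measure_mono hsub)
  have hau : (0:ℝ) < (a + u) ^ 2 := by positivity
  have hbound : (P {ω | (a + u) ^ 2 ≤ (Y ω - m + u) ^ 2}).toReal ≤ (V + u ^ 2) / (a + u) ^ 2 := by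
    rw [le_div_iff₀ hau]
    simp only [measureReal_def] at hmarkov; linarith [hmarkov]
  have hkey : (V + u ^ 2) / (a + u) ^ 2 = V / (V + a ^ 2) := by
    rw [hu]
    have ha' : a ≠ 0 := ha.ne'
    have hpos : (0:ℝ) < V + a ^ 2 := by positivity
    field_simp
    ring
  linarith [hmono, hbound, hkey ▸ hbound]

/-- If for every row index `j` the mean satisfies
`m_j ≤ x̄_j − sqrt((t−ε)/ε)·sqrt(V_j)`, then all `t` linear constraints hold simultaneously
with probability at least `1 − ε`. -/
theorem prob_all_rows_le_of_mean_tightened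
    {Ω : Type*} [MeasurableSpace Ω] (P : Measure Ω) [IsProbabilityMeasure P]
    {r t : ℕ} (ht : 1 ≤ t)
    (x : Ω → Fin r → ℝ) (hx : ∀ i, MemLp (fun ω => x ω i) 2 P)
    (T : Matrix (Fin t) (Fin r) ℝ) (xbar : Fin t → ℝ)
    {ε : ℝ} (hε : ε ∈ Set.Ioo (0 : ℝ) 1)
    (hmean : ∀ j : Fin t, ∫ ω, T j ⬝ᵥ x ω ∂P ≤
      xbar j - Real.sqrt (((t : ℝ) - ε) / ε) *
        Real.sqrt (variance (fun ω => T j ⬝ᵥ x ω) P)) :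
    1 - ε ≤ (P {ω | ∀ j : Fin t, T j ⬝ᵥ x ω ≤ xbar j}).toReal := by
  obtain ⟨hε0, hε1⟩ := hε
  have ht' : (1:ℝ) ≤ (t:ℝ) := by exact_mod_cast ht
  have htε : (0:ℝ) ≤ (t:ℝ) - ε := by linarith
  set k := Real.sqrt (((t : ℝ) - ε) / ε) with hk
  have hk0 : 0 ≤ k := Real.sqrt_nonneg _
  have hk2 : k ^ 2 = ((t:ℝ) - ε) / ε := Real.sq_sqrt (div_nonneg htε hε0.le)
  have hkpos : 0 < k := Real.sqrt_pos.2 (div_pos (by linarith) hε0)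
  -- each row's linear functional is MemLp 2
  have hYmem : ∀ j : Fin t, MemLp (fun ω => T j ⬝ᵥ x ω) 2 P := by
    intro j
    have : (fun ω => T j ⬝ᵥ x ω) = fun ω => ∑ i, T j i * x ω i := by
      funext ω; rfl
    rw [this]
    exact memLp_finset_sum _ fun i _ => (hx i).const_mul (T j i)
  -- per-row failure probability bound
  have hrow : ∀ j : Fin t, P {ω | xbar j < T j ⬝ᵥ x ω} ≤ ENNReal.ofReal (ε / t) := by
    intro j
    set Y := fun ω => T j ⬝ᵥ x ω with hYdef
    set m := ∫ ω, Y ω ∂P with hm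
    set V := variance Y P with hV
    have hVnn : 0 ≤ V := variance_nonneg _ _
    have hmj : m ≤ xbar j - k * Real.sqrt V := hmean j
    rcases eq_or_lt_of_le hVnn with hV0 | hVpos
    · -- zero variance: Y = m a.e., and m ≤ xbar j
      have hmle : m ≤ xbar j := by
        have : Real.sqrt V = 0 := by rw [← hV0]; exact Real.sqrt_zero
        rw [this] at hmj; linarith
      have hsq : Integrable (fun ω => (Y ω - m) ^ 2) P :=
        ((hYmem j).sub (memLp_const m)).integrable_sq
      have hVar : ∫ ω, (Y ω - m) ^ 2 ∂P = V := by
        rw [hV, variance_eq_integral (hYmem j).aemeasurable]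
      have hzero : (fun ω => (Y ω - m) ^ 2) =ᵐ[P] 0 := by
        rw [← integral_eq_zero_iff_of_nonneg (fun ω => sq_nonneg _) hsq, hVar, ← hV0]
      have hae : ∀ᵐ ω ∂P, Y ω = m := by
        filter_upwards [hzero] with ω hω
        have : (Y ω - m) ^ 2 = 0 := hω
        have := pow_eq_zero_iff (n := 2) (by norm_num) |>.1 this
        linarith
      have hnull : P {ω | xbar j < Y ω} = 0 := by
        apply measure_mono_null (t := {ω | ¬ Y ω = m}) ?_ ?_
        · intro ω hω
          simp only [Set.mem_setOf_eq] at hω ⊢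
          intro h; rw [h] at hω; linarith
        · exact ae_iff.1 hae
      rw [hnull]
      simp
    · -- positive variance: Cantelli
      set a := k * Real.sqrt V with ha
      have hsV : 0 < Real.sqrt V := Real.sqrt_pos.2 hVpos
      have ha0 : 0 < a := mul_pos hkpos hsV
      have hsub : {ω | xbar j < Y ω} ⊆ {ω | m + a ≤ Y ω} := by
        intro ω hω
        simp only [Set.mem_setOf_eq] at hω ⊢
        linarith
      have hcant := cantelli_toReal P Y (hYmem j) ha0
      have ha2 : a ^ 2 = ((t:ℝ) - ε) / ε * V := by
        rw [ha, mul_pow, hk2, Real.sq_sqrt hVnn]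
      have hεt : V / (V + a ^ 2) = ε / t := by
        rw [ha2]
        have h1 : (0:ℝ) < t := by linarith
        have h2 : V ≠ 0 := ne_of_gt hVpos
        field_simp
        ring
      rw [hεt] at hcant
      show P {ω | xbar j < Y ω} ≤ ENNReal.ofReal (ε / t)
      calc P {ω | xbar j < Y ω} ≤ P {ω | m + a ≤ Y ω} := measure_mono hsub
        _ ≤ ENNReal.ofReal (ε / t) := by
            rw [ENNReal.le_ofReal_iff_toReal_le (measure_ne_top _ _)
              (div_nonneg hε0.le (by positivity))]
            exact hcant
  -- union bound
  set G := {ω | ∀ j : Fin t, T j ⬝ᵥ x ω ≤ xbar j} with hG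
  have hGc : Gᶜ = ⋃ j, {ω | xbar j < T j ⬝ᵥ x ω} := by
    ext ω
    simp [hG, not_forall, not_le]
  have hB : P Gᶜ ≤ ENNReal.ofReal ε := by
    rw [hGc]
    calc P (⋃ j, {ω | xbar j < T j ⬝ᵥ x ω}) ≤ ∑' j, P {ω | xbar j < T j ⬝ᵥ x ω} :=
          measure_iUnion_le _
      _ ≤ ∑' (j : Fin t), ENNReal.ofReal (ε / t) := ENNReal.tsum_le_tsum hrow
      _ = (t : ENNReal) * ENNReal.ofReal (ε / t) := by
          simp [tsum_fintype, Finset.sum_const, nsmul_eq_mul]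
      _ = ENNReal.ofReal ε := by
          have htne : (t:ℝ) ≠ 0 := by positivity
          have : (t:ℝ) * (ε / t) = ε := by field_simp
          rw [← ENNReal.ofReal_natCast, ← ENNReal.ofReal_mul (by positivity), this]
  have h1 : 1 - ENNReal.ofReal ε ≤ P G := by
    have hle : P (G ∪ Gᶜ) ≤ P G + P Gᶜ := measure_union_le _ _
    rw [Set.union_compl_self, measure_univ] at hle
    have h2 : (1 : ENNReal) ≤ P G + ENNReal.ofReal ε := hle.trans (add_le_add_right hB _)
    exact tsub_le_iff_right.2 h2
  have h3 : (1 - ENNReal.ofReal ε).toReal ≤ (P G).toReal :=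
    ENNReal.toReal_mono (measure_ne_top _ _) h1
  have h4 : (1 - ENNReal.ofReal ε).toReal = 1 - ε := by
    rw [ENNReal.toReal_sub_of_le (by simpa using hε1.le) (by simp)]
    simp [ENNReal.toReal_ofReal hε0.le]
  rw [h4] at h3
  exact h3
end

section
/- There exists a constant C ∈ ℝ, independent of the choice of x'_0 ∈ ℝ^n, such that for every x'_0 ∈ ℝ^n, J_c(x'_0) = (x'_0)ᵀ 𝒜₁ x'_0 + x̂ᵀ 𝒜₂ x'_0 + C, where x̂ = E[x''_0], 𝒜₂ = Σ_{k=0}^{N−1} 2 (F^k)ᵀ Q Ψ_{k−1} + 2 (F^N)ᵀ Q_N Ψ_{N−1}, and 𝒜₁ = Σ_{k=0}^{N−1} [ Ψ_{k−1}ᵀ Q Ψ_{k−1} + (F_K^k)ᵀ Kᵀ R K F_K^k ] + Ψ_{N−1}ᵀ Q_N Ψ_{N−1}, with Ψ_{k−1} = Σ_{h=0}^{k−1} F^h G K F_K^{k−h−1} (and Ψ_{−1} = 0). -/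
open MeasureTheory Matrix

section Aux
variable {Ω : Type*} [MeasurableSpace Ω] {P : Measure Ω} [IsProbabilityMeasure P]

lemma intmul {f g : Ω → ℝ} (hf : MemLp f 2 P) (hg : MemLp g 2 P) :
    Integrable (fun ω => f ω * g ω) P := by
  have h : MemLp (f • g) 1 P := hg.smul hf (hpqr := ⟨by simp [one_div, ENNReal.inv_two_add_inv_two]⟩)
  exact (h.integrable le_rfl).congr (by filter_upwards with ω; simp [Pi.smul_apply, smul_eq_mul])

lemma memlp_mulVec {ι : Type*} [Fintype ι] (A : Matrix ι ι ℝ) {y : Ω → ι → ℝ}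
    (hy : ∀ i, MemLp (fun ω => y ω i) 2 P) (i : ι) :
    MemLp (fun ω => A.mulVec (y ω) i) 2 P := by
  simp only [Matrix.mulVec, dotProduct]
  exact memLp_finset_sum _ (fun j _ => (hy j).const_mul _)

lemma integrable_quad {ι : Type*} [Fintype ι] (A : Matrix ι ι ℝ) {y : Ω → ι → ℝ}
    (hy : ∀ i, MemLp (fun ω => y ω i) 2 P) :
    Integrable (fun ω => y ω ⬝ᵥ A.mulVec (y ω)) P := by
  have : (fun ω => y ω ⬝ᵥ A.mulVec (y ω))
      = fun ω => ∑ i, ∑ j, A i j * (y ω i * y ω j) := by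
    funext ω
    simp only [dotProduct, Matrix.mulVec, Finset.mul_sum]
    exact Finset.sum_congr rfl fun i _ => Finset.sum_congr rfl fun j _ => by ring
  rw [this]
  exact integrable_finset_sum _ fun i _ => integrable_finset_sum _ fun j _ =>
    (intmul (hy i) (hy j)).const_mul _

lemma integrable_dotc {ι : Type*} [Fintype ι] {y : Ω → ι → ℝ}
    (hy : ∀ i, MemLp (fun ω => y ω i) 2 P) (c : ι → ℝ) :
    Integrable (fun ω => y ω ⬝ᵥ c) P := by
  simp only [dotProduct]
  exact integrable_finset_sum _ fun i _ => ((hy i).integrable one_le_two).mul_const _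

lemma integral_dotc {ι : Type*} [Fintype ι] {y : Ω → ι → ℝ}
    (hy : ∀ i, MemLp (fun ω => y ω i) 2 P) (c : ι → ℝ) :
    ∫ ω, y ω ⬝ᵥ c ∂P = (fun i => ∫ ω, y ω i ∂P) ⬝ᵥ c := by
  simp only [dotProduct]
  rw [integral_finset_sum _ fun i _ => ((hy i).integrable one_le_two).mul_const _]
  exact Finset.sum_congr rfl fun i _ => integral_mul_const _ _

lemma integral_quadratic {ι : Type*} [Fintype ι] (A : Matrix ι ι ℝ) (hA : A.IsSymm)
    (c : ι → ℝ) {q : Ω → ι → ℝ} (hq : ∀ i, MemLp (fun ω => q ω i) 2 P) :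
    ∫ ω, (c + q ω) ⬝ᵥ A.mulVec (c + q ω) ∂P =
      c ⬝ᵥ A.mulVec c + 2 * ((fun i => ∫ ω, q ω i ∂P) ⬝ᵥ A.mulVec c)
        + ∫ ω, q ω ⬝ᵥ A.mulVec (q ω) ∂P := by
  have hsym : ∀ ω, c ⬝ᵥ A.mulVec (q ω) = q ω ⬝ᵥ A.mulVec c := by
    intro ω
    rw [Matrix.dotProduct_mulVec]
    conv_lhs => rw [← hA]
    rw [Matrix.vecMul_transpose, dotProduct_comm]
  have hpt : (fun ω => (c + q ω) ⬝ᵥ A.mulVec (c + q ω))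
      = fun ω => c ⬝ᵥ A.mulVec c +
          (2 * (q ω ⬝ᵥ A.mulVec c) + q ω ⬝ᵥ A.mulVec (q ω)) := by
    funext ω
    rw [Matrix.mulVec_add, dotProduct_add, add_dotProduct,
      add_dotProduct, hsym ω]
    ring
  have i0 : Integrable (fun ω => 2 * (q ω ⬝ᵥ A.mulVec c)) P :=
    (integrable_dotc hq (A.mulVec c)).const_mul 2
  have i1 : Integrable (fun ω => 2 * (q ω ⬝ᵥ A.mulVec c) + q ω ⬝ᵥ A.mulVec (q ω)) P :=
    i0.add (integrable_quad A hq)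
  rw [hpt, integral_add (integrable_const _) i1,
    integral_add i0 (integrable_quad A hq),
    MeasureTheory.integral_const_mul, integral_dotc hq (A.mulVec c)]
  simp [add_assoc]

end Aux

lemma sum_mulVec' {ι κ : Type*} [Fintype κ] (s : Finset ι) (M : ι → Matrix κ κ ℝ) (v : κ → ℝ) :
    (∑ i ∈ s, M i) *ᵥ v = ∑ i ∈ s, M i *ᵥ v := by
  induction s using Finset.cons_induction with
  | empty => simp [Matrix.zero_mulVec]
  | cons a s ha ih => simp [Finset.sum_cons, Matrix.add_mulVec, ih]

lemma dot_sum' {ι κ : Type*} [Fintype κ] (s : Finset ι) (u : κ → ℝ) (f : ι → κ → ℝ) :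
    u ⬝ᵥ ∑ i ∈ s, f i = ∑ i ∈ s, u ⬝ᵥ f i := by
  induction s using Finset.cons_induction with
  | empty => simp
  | cons a s ha ih => simp [Finset.sum_cons, dotProduct_add, ih]

lemma conj_dot {ι κ : Type*} [Fintype ι] [Fintype κ]
    (A : Matrix κ ι ℝ) (B : Matrix κ κ ℝ) (D : Matrix κ ι ℝ) (u w : ι → ℝ) :
    u ⬝ᵥ (Aᵀ * B * D) *ᵥ w = (A *ᵥ u) ⬝ᵥ B *ᵥ (D *ᵥ w) := by
  rw [← Matrix.mulVec_mulVec, ← Matrix.mulVec_mulVec, Matrix.dotProduct_mulVec,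
    Matrix.vecMul_transpose]

/-- `Psi F G K k` is the matrix `Ψ_{k−1} = Σ_{h=0}^{k−1} F^h G K F_K^{k−h−1}`
(so that `Psi F G K 0 = Ψ_{−1} = 0`), where `F_K = F + G K`. -/
noncomputable def Psi {n m : ℕ} (F : Matrix (Fin n) (Fin n) ℝ)
    (G : Matrix (Fin n) (Fin m) ℝ) (K : Matrix (Fin m) (Fin n) ℝ) (k : ℕ) :
    Matrix (Fin n) (Fin n) ℝ :=
  ∑ h ∈ Finset.range k, F ^ h * G * K * (F + G * K) ^ (k - h - 1)

lemma Psi_zero {n m : ℕ} (F : Matrix (Fin n) (Fin n) ℝ)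
    (G : Matrix (Fin n) (Fin m) ℝ) (K : Matrix (Fin m) (Fin n) ℝ) :
    Psi F G K 0 = 0 := by simp [Psi]

lemma Psi_succ {n m : ℕ} (F : Matrix (Fin n) (Fin n) ℝ)
    (G : Matrix (Fin n) (Fin m) ℝ) (K : Matrix (Fin m) (Fin n) ℝ) (k : ℕ) :
    Psi F G K (k + 1) = F * Psi F G K k + G * K * (F + G * K) ^ k := by
  rw [Psi, Psi, Finset.sum_range_succ', Finset.mul_sum]
  congr 1
  · refine Finset.sum_congr rfl fun h _ => ?_
    rw [Nat.succ_sub_succ, pow_succ']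
    simp only [Matrix.mul_assoc]
  · simp


/-- There is a constant `C`, independent of `x'_0`, such that the expected
finite-horizon quadratic cost satisfies
`J_c(x'_0) = (x'_0)ᵀ 𝒜₁ x'_0 + x̂ᵀ 𝒜₂ x'_0 + C` with `x̂ = E[x''_0]`,
`𝒜₂ = Σ_{k<N} 2 (F^k)ᵀ Q Ψ_{k−1} + 2 (F^N)ᵀ Q_N Ψ_{N−1}` and
`𝒜₁ = Σ_{k<N} [Ψ_{k−1}ᵀ Q Ψ_{k−1} + (F_K^k)ᵀ Kᵀ R K F_K^k] + Ψ_{N−1}ᵀ Q_N Ψ_{N−1}`. -/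
theorem expected_cost_quadratic_in_initial_state
    {n m : ℕ} {Ω : Type*} [MeasurableSpace Ω]
    (P : Measure Ω) [IsProbabilityMeasure P]
    (F : Matrix (Fin n) (Fin n) ℝ) (G : Matrix (Fin n) (Fin m) ℝ)
    (K : Matrix (Fin m) (Fin n) ℝ)
    (Q QN : Matrix (Fin n) (Fin n) ℝ) (R : Matrix (Fin m) (Fin m) ℝ)
    (hQ : Q.IsSymm) (hQN : QN.IsSymm) (hR : R.IsSymm)
    {N : ℕ} (hN : 1 ≤ N)
    (x0'' : Ω → Fin n → ℝ) (hx0'' : ∀ i, MemLp (fun ω => x0'' ω i) 2 P)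
    (w' w'' : ℕ → Ω → Fin n → ℝ)
    (hw' : ∀ k i, MemLp (fun ω => w' k ω i) 2 P)
    (hw'' : ∀ k i, MemLp (fun ω => w'' k ω i) 2 P)
    (hw'mean : ∀ k i, ∫ ω, w' k ω i ∂P = 0)
    (hw''mean : ∀ k i, ∫ ω, w'' k ω i ∂P = 0)
    (hindep : ProbabilityTheory.iIndepFun
      (fun a : Option (ℕ ⊕ ℕ) => a.elim x0'' (Sum.elim w' w'')) P)
    (x' x'' : (Fin n → ℝ) → ℕ → Ω → Fin n → ℝ)
    (h0' : ∀ v ω, x' v 0 ω = v)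
    (h0'' : ∀ v ω, x'' v 0 ω = x0'' ω)
    (hrec' : ∀ v k ω, x' v (k + 1) ω = (F + G * K).mulVec (x' v k ω) + w' k ω)
    (hrec'' : ∀ v k ω, x'' v (k + 1) ω =
      F.mulVec (x'' v k ω) + (G * K).mulVec (x' v k ω) + w'' k ω) :
    ∃ C : ℝ, ∀ v : Fin n → ℝ,
      (∫ ω, (∑ k ∈ Finset.range N,
            (x'' v k ω ⬝ᵥ Q.mulVec (x'' v k ω) +
              x' v k ω ⬝ᵥ (Kᵀ * R * K).mulVec (x' v k ω))) +
          x'' v N ω ⬝ᵥ QN.mulVec (x'' v N ω) ∂P) =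
        v ⬝ᵥ ((∑ k ∈ Finset.range N,
              ((Psi F G K k)ᵀ * Q * Psi F G K k +
                ((F + G * K) ^ k)ᵀ * Kᵀ * R * K * (F + G * K) ^ k)) +
            (Psi F G K N)ᵀ * QN * Psi F G K N).mulVec v +
          (fun i => ∫ ω, x0'' ω i ∂P) ⬝ᵥ ((∑ k ∈ Finset.range N,
              (2 : ℝ) • ((F ^ k)ᵀ * Q * Psi F G K k)) +
            (2 : ℝ) • ((F ^ N)ᵀ * QN * Psi F G K N)).mulVec v + C := by
  have hM : (Kᵀ * R * K).IsSymm := by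
    show (Kᵀ * R * K)ᵀ = Kᵀ * R * K
    rw [Matrix.transpose_mul, Matrix.transpose_mul, Matrix.transpose_transpose, hR,
      Matrix.mul_assoc]
  -- linear decompositions
  have hx'lin : ∀ v k ω, x' v k ω = ((F + G * K) ^ k) *ᵥ v + x' 0 k ω := by
    intro v k
    induction k with
    | zero => intro ω; simp [h0']
    | succ k ih =>
      intro ω
      rw [hrec' v k ω, hrec' 0 k ω, ih ω, Matrix.mulVec_add, Matrix.mulVec_mulVec,
        ← pow_succ']
      abel
  have hx''lin : ∀ v k ω, x'' v k ω = (Psi F G K k) *ᵥ v + x'' 0 k ω := by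
    intro v k
    induction k with
    | zero => intro ω; simp [h0'', Psi_zero]
    | succ k ih =>
      intro ω
      rw [hrec'' v k ω, hrec'' 0 k ω, ih ω, hx'lin v k ω, Psi_succ,
        Matrix.mulVec_add, Matrix.mulVec_add, Matrix.add_mulVec,
        Matrix.mulVec_mulVec, Matrix.mulVec_mulVec]
      abel
  -- square integrability
  have hp2 : ∀ k i, MemLp (fun ω => x' 0 k ω i) 2 P := by
    intro k
    induction k with
    | zero =>
      intro i
      have h : (fun ω => x' 0 0 ω i) = fun _ => (0 : ℝ) := by
        funext ω; rw [h0']; rfl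
      rw [h]; exact memLp_const 0
    | succ k ih =>
      intro i
      have h : (fun ω => x' 0 (k + 1) ω i)
          = fun ω => (F + G * K).mulVec (x' 0 k ω) i + w' k ω i := by
        funext ω; rw [hrec']; rfl
      rw [h]; exact (memlp_mulVec _ ih i).add (hw' k i)
  have hq2 : ∀ k i, MemLp (fun ω => x'' 0 k ω i) 2 P := by
    intro k
    induction k with
    | zero =>
      intro i
      have h : (fun ω => x'' 0 0 ω i) = fun ω => x0'' ω i := by
        funext ω; rw [h0'']
      rw [h]; exact hx0'' i
    | succ k ih =>
      intro i
      have h : (fun ω => x'' 0 (k + 1) ω i)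
          = fun ω => (F.mulVec (x'' 0 k ω) i + (G * K).mulVec (x' 0 k ω) i) + w'' k ω i := by
        funext ω; rw [hrec'']; rfl
      rw [h]
      exact ((memlp_mulVec _ ih i).add (memlp_mulVec _ (hp2 k) i)).add (hw'' k i)
  -- means
  have hpmean : ∀ k, (fun i => ∫ ω, x' 0 k ω i ∂P) = (0 : Fin n → ℝ) := by
    intro k
    induction k with
    | zero => funext i; simp [h0']
    | succ k ih =>
      funext i
      have hterm : ∀ j, ∫ ω, x' 0 k ω j ∂P = 0 := fun j => congrFun ih j
      have h : (fun ω => x' 0 (k + 1) ω i)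
          = fun ω => (∑ j, (F + G * K) i j * x' 0 k ω j) + w' k ω i := by
        funext ω; rw [hrec']; rfl
      rw [h, integral_add
          (integrable_finset_sum _ fun j _ => ((hp2 k j).integrable one_le_two).const_mul _)
          ((hw' k i).integrable one_le_two),
        integral_finset_sum _ fun j _ => ((hp2 k j).integrable one_le_two).const_mul _,
        hw'mean]
      simp [MeasureTheory.integral_const_mul, hterm]
  have hqmean : ∀ k, (fun i => ∫ ω, x'' 0 k ω i ∂P)
      = (F ^ k) *ᵥ (fun i => ∫ ω, x0'' ω i ∂P) := by
    intro k
    induction k with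
    | zero => funext i; simp [h0'']
    | succ k ih =>
      funext i
      have hterm : ∀ j, ∫ ω, x'' 0 k ω j ∂P = ((F ^ k) *ᵥ (fun i => ∫ ω, x0'' ω i ∂P)) j :=
        fun j => congrFun ih j
      have hterm' : ∀ j, ∫ ω, x' 0 k ω j ∂P = 0 := fun j => congrFun (hpmean k) j
      have h : (fun ω => x'' 0 (k + 1) ω i)
          = fun ω => ((∑ j, F i j * x'' 0 k ω j) + ∑ j, (G * K) i j * x' 0 k ω j)
              + w'' k ω i := by
        funext ω; rw [hrec'']; rfl
      have iq : Integrable (fun ω => ∑ j, F i j * x'' 0 k ω j) P :=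
        integrable_finset_sum _ fun j _ => ((hq2 k j).integrable one_le_two).const_mul _
      have ip : Integrable (fun ω => ∑ j, (G * K) i j * x' 0 k ω j) P :=
        integrable_finset_sum _ fun j _ => ((hp2 k j).integrable one_le_two).const_mul _
      have iqp : Integrable (fun ω =>
          (∑ j, F i j * x'' 0 k ω j) + ∑ j, (G * K) i j * x' 0 k ω j) P := iq.add ip
      rw [h, integral_add iqp ((hw'' k i).integrable one_le_two),
        integral_add iq ip,
        integral_finset_sum _ (fun j _ => ((hq2 k j).integrable one_le_two).const_mul _),
        integral_finset_sum _ (fun j _ => ((hp2 k j).integrable one_le_two).const_mul _),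
        hw''mean]
      simp only [MeasureTheory.integral_const_mul, hterm, hterm', mul_zero,
        Finset.sum_const_zero, add_zero]
      rw [pow_succ', ← Matrix.mulVec_mulVec]
      rfl
  refine ⟨(∑ k ∈ Finset.range N,
      ((∫ ω, x'' 0 k ω ⬝ᵥ Q *ᵥ x'' 0 k ω ∂P)
        + ∫ ω, x' 0 k ω ⬝ᵥ (Kᵀ * R * K) *ᵥ x' 0 k ω ∂P))
      + ∫ ω, x'' 0 N ω ⬝ᵥ QN *ᵥ x'' 0 N ω ∂P, fun v => ?_⟩
  -- entrywise L² of the shifted processes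
  have hy'' : ∀ k i, MemLp (fun ω => (Psi F G K k *ᵥ v + x'' 0 k ω) i) 2 P :=
    fun k i => (memLp_const (μ := P) ((Psi F G K k *ᵥ v) i)).add (hq2 k i)
  have hy' : ∀ k i, MemLp (fun ω => ((F + G * K) ^ k *ᵥ v + x' 0 k ω) i) 2 P :=
    fun k i => (memLp_const (μ := P) (((F + G * K) ^ k *ᵥ v) i)).add (hp2 k i)
  have quad1 : ∀ k, Integrable (fun ω =>
      (Psi F G K k *ᵥ v + x'' 0 k ω) ⬝ᵥ Q *ᵥ (Psi F G K k *ᵥ v + x'' 0 k ω)) P :=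
    fun k => integrable_quad Q (hy'' k)
  have quad1N : Integrable (fun ω =>
      (Psi F G K N *ᵥ v + x'' 0 N ω) ⬝ᵥ QN *ᵥ (Psi F G K N *ᵥ v + x'' 0 N ω)) P :=
    integrable_quad QN (hy'' N)
  have quad2 : ∀ k, Integrable (fun ω =>
      ((F + G * K) ^ k *ᵥ v + x' 0 k ω) ⬝ᵥ (Kᵀ * R * K) *ᵥ
        ((F + G * K) ^ k *ᵥ v + x' 0 k ω)) P :=
    fun k => integrable_quad _ (hy' k)
  -- rewrite LHS
  have hL : (∫ ω, (∑ k ∈ Finset.range N,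
        (x'' v k ω ⬝ᵥ Q.mulVec (x'' v k ω) +
          x' v k ω ⬝ᵥ (Kᵀ * R * K).mulVec (x' v k ω))) +
      x'' v N ω ⬝ᵥ QN.mulVec (x'' v N ω) ∂P)
      = (∑ k ∈ Finset.range N,
          ((∫ ω, (Psi F G K k *ᵥ v + x'' 0 k ω) ⬝ᵥ Q *ᵥ (Psi F G K k *ᵥ v + x'' 0 k ω) ∂P)
            + ∫ ω, ((F + G * K) ^ k *ᵥ v + x' 0 k ω) ⬝ᵥ (Kᵀ * R * K) *ᵥ
                ((F + G * K) ^ k *ᵥ v + x' 0 k ω) ∂P))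
        + ∫ ω, (Psi F G K N *ᵥ v + x'' 0 N ω) ⬝ᵥ QN *ᵥ (Psi F G K N *ᵥ v + x'' 0 N ω) ∂P := by
    have quad12 : ∀ k, Integrable (fun ω =>
        (Psi F G K k *ᵥ v + x'' 0 k ω) ⬝ᵥ Q *ᵥ (Psi F G K k *ᵥ v + x'' 0 k ω)
          + ((F + G * K) ^ k *ᵥ v + x' 0 k ω) ⬝ᵥ (Kᵀ * R * K) *ᵥ
              ((F + G * K) ^ k *ᵥ v + x' 0 k ω)) P :=
      fun k => (quad1 k).add (quad2 k)
    have isum : Integrable (fun ω => ∑ k ∈ Finset.range N,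
        ((Psi F G K k *ᵥ v + x'' 0 k ω) ⬝ᵥ Q *ᵥ (Psi F G K k *ᵥ v + x'' 0 k ω)
          + ((F + G * K) ^ k *ᵥ v + x' 0 k ω) ⬝ᵥ (Kᵀ * R * K) *ᵥ
              ((F + G * K) ^ k *ᵥ v + x' 0 k ω))) P :=
      integrable_finset_sum _ fun k _ => quad12 k
    simp only [hx''lin v, hx'lin v]
    rw [integral_add isum quad1N, integral_finset_sum _ fun k _ => quad12 k]
    exact congrArg (· + _) (Finset.sum_congr rfl fun k _ => integral_add (quad1 k) (quad2 k))
  rw [hL]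
  -- expand each expected quadratic form
  have e1 : ∀ (A : Matrix (Fin n) (Fin n) ℝ), A.IsSymm → ∀ k,
      ∫ ω, (Psi F G K k *ᵥ v + x'' 0 k ω) ⬝ᵥ A *ᵥ (Psi F G K k *ᵥ v + x'' 0 k ω) ∂P
      = (Psi F G K k *ᵥ v) ⬝ᵥ A *ᵥ (Psi F G K k *ᵥ v)
        + 2 * ((F ^ k *ᵥ (fun i => ∫ ω, x0'' ω i ∂P)) ⬝ᵥ A *ᵥ (Psi F G K k *ᵥ v))
        + ∫ ω, x'' 0 k ω ⬝ᵥ A *ᵥ x'' 0 k ω ∂P := by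
    intro A hA k
    rw [integral_quadratic A hA _ (hq2 k), hqmean k]
  have e2 : ∀ k, ∫ ω, ((F + G * K) ^ k *ᵥ v + x' 0 k ω) ⬝ᵥ (Kᵀ * R * K) *ᵥ
        ((F + G * K) ^ k *ᵥ v + x' 0 k ω) ∂P
      = ((F + G * K) ^ k *ᵥ v) ⬝ᵥ (Kᵀ * R * K) *ᵥ ((F + G * K) ^ k *ᵥ v)
        + ∫ ω, x' 0 k ω ⬝ᵥ (Kᵀ * R * K) *ᵥ x' 0 k ω ∂P := by
    intro k
    rw [integral_quadratic _ hM _ (hp2 k), hpmean k]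
    simp
  simp only [e1 Q hQ, e1 QN hQN, e2]
  -- expand RHS
  have assocM : ∀ k : ℕ, ((F + G * K) ^ k)ᵀ * Kᵀ * R * K * (F + G * K) ^ k
      = ((F + G * K) ^ k)ᵀ * (Kᵀ * R * K) * (F + G * K) ^ k := fun k => by
    simp only [Matrix.mul_assoc]
  rw [Matrix.add_mulVec, dotProduct_add, sum_mulVec', dot_sum',
    Matrix.add_mulVec, dotProduct_add, sum_mulVec', dot_sum']
  simp only [Matrix.add_mulVec, dotProduct_add, assocM, conj_dot,
    Matrix.smul_mulVec, dotProduct_smul, smul_eq_mul]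
  simp only [Finset.sum_add_distrib]
  ring
end
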